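/- For n = 1, 2, 3, …, let X_n be a locally compact, second countable, Hausdorff topological space and let W_0 = ({0} ∪ ∪_{k=1}^∞ X_1 × ⋯ × X_k) ∪ Π_{n=1}^∞ X_n carry the quotient topology induced by the truncation map Q. Then for a sequence {x^n} in W_0 and x ∈ W_0, x^n → x in W_0 if and only if x^n → x pointwise, i.e.: (i) if x ∈ Z = Π_{n=1}^∞ X_n, then ℓ(x^n) → ∞ and x^n_i → x_i in X_i for every i; (ii) if x ∈ Y_0 (a finite string, of length ℓ(x)), then ℓ(x^n) ≥ ℓ(x) eventually, x^n_i → x_i in X_i for 1 ≤ i ≤ ℓ(x), and x^n_{ℓ(x)+1} → ∞_{ℓ(x)+1} in X_{ℓ(x)+1}^∞, where x^n_{ℓ(x)+1} is taken to be ∞_{ℓ(x)+1} whenever ℓ(x^n) = ℓ(x). -/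

import Mathlib

open Filter Topology

/-- The set `W₀ = Y₀ ∪ Z`: the disjoint union of the finite products
`Y^k = X_1 × ⋯ × X_k` (with `Y^0 = {0}` a single point, the empty string) and the
infinite product `Z = Π_{n} X_n`.  (Indices are `0`-based here: `X 0, X 1, …` play the
roles of `X_1, X_2, …`.) -/
def W0 (X : ℕ → Type) : Type := (Σ k : ℕ, ∀ i : Fin k, X i) ⊕ (∀ n, X n)

namespace W0

variable {X : ℕ → Type}

/-- A finite string, an element of `Y₀ = ∪_k Y^k ⊂ W₀`. -/
def fin (p : Σ k : ℕ, ∀ i : Fin k, X i) : W0 X := Sum.inl p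

/-- An infinite string, an element of `Z = Π_n X_n ⊂ W₀`. -/
def inf (z : ∀ n, X n) : W0 X := Sum.inr z

/-- The point `0`, the empty string: the unique element of `Y^0`. -/
def zero : W0 X := Sum.inl ⟨0, fun i => i.elim0⟩

/-- The length `ℓ(w) ∈ ℕ ∪ {∞}` of an element of `W₀`. -/
def len : W0 X → ℕ∞ := Sum.elim (fun p => (p.1 : ℕ∞)) (fun _ => ⊤)

/-- The `i`-th coordinate of an element of `W₀`, as an element of the one-point
compactification `X_i^∞`; it is taken to be `∞_i` when `i ≥ ℓ(w)`. -/
def coord (w : W0 X) (i : ℕ) : OnePoint (X i) :=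
  Sum.elim
    (fun p : Σ k : ℕ, ∀ j : Fin k, X j =>
      if h : i < p.1 then ((p.2 ⟨i, h⟩ : X i) : OnePoint (X i)) else OnePoint.infty)
    (fun z => ((z i : X i) : OnePoint (X i))) w

/-- The value of a point of `X^∞` other than `∞`. -/
noncomputable def val {Y : Type} (o : OnePoint Y) (h : o ≠ OnePoint.infty) : Y :=
  (OnePoint.ne_infty_iff_exists.mp h).choose

open Classical in
/-- The truncation map `Q : A = Π_n X_n^∞ → W₀`: `Q({x_i}) = {x_i} ∈ Z` if no
coordinate is a point at infinity; `Q({x_i}) = (x_1, …, x_n) ∈ Y^n` if `n` is smallest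
with `x_{n+1} = ∞_{n+1}`; `Q({x_i}) = 0` if `x_1 = ∞_1`. -/
noncomputable def Q (x : ∀ n, OnePoint (X n)) : W0 X :=
  if h : ∃ n, x n = OnePoint.infty then
    fin ⟨Nat.find h, fun i => val (x i) (Nat.find_min h i.isLt)⟩
  else
    inf fun n => val (x n) (fun hn => h ⟨n, hn⟩)

/-- `W₀` carries the quotient topology induced by the surjection `Q` from the product
`A = Π_n X_n^∞` of the one-point compactifications. -/
noncomputable instance [∀ n, TopologicalSpace (X n)] : TopologicalSpace (W0 X) :=
  TopologicalSpace.coinduced Q Pi.topologicalSpace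

end W0

theorem onePoint_firstCountable (Y : Type) [TopologicalSpace Y] [LocallyCompactSpace Y]
    [SecondCountableTopology Y] [T2Space Y] :
    FirstCountableTopology (OnePoint Y) := by
  constructor
  intro a
  induction a using OnePoint.rec with
  | infty =>
    have K := CompactExhaustion.choice Y
    have hb : (𝓝 (OnePoint.infty : OnePoint Y)).HasBasis (fun _ : ℕ => True)
        (fun n => (fun y : Y => (y : OnePoint Y)) '' (K n)ᶜ ∪ {OnePoint.infty}) := by
      apply OnePoint.hasBasis_nhds_infty.to_hasBasis'
      · rintro s ⟨hsc, hsk⟩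
        obtain ⟨n, hn⟩ := K.exists_superset_of_isCompact hsk
        exact ⟨n, trivial,
          Set.union_subset_union_left _ (Set.image_mono (Set.compl_subset_compl.mpr hn))⟩
      · intro n _
        exact OnePoint.hasBasis_nhds_infty.mem_of_mem ⟨(K.isCompact n).isClosed, K.isCompact n⟩
    exact hb.isCountablyGenerated
  | coe y =>
    rw [OnePoint.nhds_coe_eq]
    infer_instance

namespace W0

variable {X : ℕ → Type}

theorem coe_val {Y : Type} (o : OnePoint Y) (h : o ≠ OnePoint.infty) :
    ((val o h : Y) : OnePoint Y) = o :=
  (OnePoint.ne_infty_iff_exists.mp h).choose_spec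

theorem val_eq {Y : Type} {o : OnePoint Y} {y : Y} (hy : o = (y : OnePoint Y))
    (h : o ≠ OnePoint.infty) : val o h = y :=
  OnePoint.coe_injective (by rw [coe_val, hy])

theorem coord_inf (z : ∀ n, X n) (i : ℕ) :
    (inf z).coord i = ((z i : X i) : OnePoint (X i)) := rfl

theorem coord_fin (p : Σ k : ℕ, ∀ i : Fin k, X i) (i : ℕ) :
    (fin p).coord i =
      if h : i < p.1 then ((p.2 ⟨i, h⟩ : X i) : OnePoint (X i)) else OnePoint.infty := rfl

theorem coord_fin_of_lt (p : Σ k : ℕ, ∀ i : Fin k, X i) {i : ℕ} (h : i < p.1) :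
    (fin p).coord i = ((p.2 ⟨i, h⟩ : X i) : OnePoint (X i)) := by
  rw [coord_fin, dif_pos h]

theorem coord_fin_of_ge (p : Σ k : ℕ, ∀ i : Fin k, X i) {i : ℕ} (h : ¬i < p.1) :
    (fin p).coord i = OnePoint.infty := by
  rw [coord_fin, dif_neg h]

theorem len_fin (p : Σ k : ℕ, ∀ i : Fin k, X i) : (fin p).len = (p.1 : ℕ∞) := rfl
theorem len_inf (z : ∀ n, X n) : (inf z).len = ⊤ := rfl

theorem le_len_of_coord_ne {w : W0 X} {j : ℕ} (h : w.coord j ≠ OnePoint.infty) :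
    ((j + 1 : ℕ) : ℕ∞) ≤ w.len := by
  cases w with
  | inl p =>
    rw [show Sum.inl p = fin p from rfl] at *
    rw [coord_fin] at h
    by_cases hj : j < p.1
    · rw [len_fin]
      exact_mod_cast hj
    · rw [dif_neg hj] at h
      exact absurd rfl h
  | inr z =>
    rw [show Sum.inr z = inf z from rfl, len_inf]
    exact le_top

open Classical in
theorem Q_eq_of_exists {a : ∀ n, OnePoint (X n)} (h : ∃ n, a n = OnePoint.infty) :
    Q a = fin ⟨Nat.find h, fun i => val (a i) (Nat.find_min h i.isLt)⟩ := dif_pos h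

theorem Q_eq_of_not_exists {a : ∀ n, OnePoint (X n)} (h : ¬∃ n, a n = OnePoint.infty) :
    Q a = inf fun n => val (a n) (fun hn => h ⟨n, hn⟩) := dif_neg h

open Classical in
theorem coord_Q_of (a : ∀ n, OnePoint (X n)) (j : ℕ)
    (hj : ∀ m, m < j → a m ≠ OnePoint.infty) : (Q a).coord j = a j := by
  by_cases h : ∃ n, a n = OnePoint.infty
  · rw [Q_eq_of_exists h, coord_fin]
    have hjf : j ≤ Nat.find h := by
      by_contra hc
      push_neg at hc
      exact hj _ hc (Nat.find_spec h)
    by_cases hlt : j < Nat.find h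
    · rw [dif_pos hlt]
      exact coe_val _ (Nat.find_min h hlt)
    · rw [dif_neg hlt]
      have hfj : Nat.find h = j := le_antisymm (not_lt.mp hlt) hjf
      rw [← hfj]
      exact (Nat.find_spec h).symm
  · rw [Q_eq_of_not_exists h, coord_inf]
    exact coe_val _ _

open Classical in
theorem ne_infty_of_coord_Q {a : ∀ n, OnePoint (X n)} {j : ℕ}
    (h : (Q a).coord j ≠ OnePoint.infty) : ∀ m, m ≤ j → a m ≠ OnePoint.infty := by
  intro m hm
  by_cases he : ∃ n, a n = OnePoint.infty
  · rw [Q_eq_of_exists he, coord_fin] at h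
    by_cases hlt : j < Nat.find he
    · exact Nat.find_min he (lt_of_le_of_lt hm hlt)
    · rw [dif_neg hlt] at h
      exact absurd rfl h
  · exact fun hc => he ⟨m, hc⟩

theorem sigma_mk_eq {k k' : ℕ} (h : k = k') (f : ∀ i : Fin k, X i) (g : ∀ i : Fin k', X i)
    (hfg : ∀ (i : ℕ) (hi : i < k) (hi' : i < k'), f ⟨i, hi⟩ = g ⟨i, hi'⟩) :
    (⟨k, f⟩ : Σ k, ∀ i : Fin k, X i) = ⟨k', g⟩ := by
  subst h
  have : f = g := funext fun i => by
    rcases i with ⟨i, hi⟩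
    exact hfg i hi hi
  rw [this]

noncomputable def liftW (w : W0 X) : ∀ n, OnePoint (X n) := fun n => w.coord n

open Classical in
theorem Q_liftW (w : W0 X) : Q (liftW w) = w := by
  cases w with
  | inl p =>
    obtain ⟨k, f⟩ := p
    have h : ∃ n, liftW (fin ⟨k, f⟩) n = OnePoint.infty := by
      refine ⟨k, ?_⟩
      show (fin ⟨k, f⟩).coord k = OnePoint.infty
      rw [coord_fin, dif_neg (lt_irrefl k)]
    have hk : Nat.find h = k := by
      rw [Nat.find_eq_iff]
      constructor
      · show (fin ⟨k, f⟩).coord k = OnePoint.infty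
        rw [coord_fin, dif_neg (lt_irrefl k)]
      · intro m hm hc
        have h2 : (fin (⟨k, f⟩ : Σ k, ∀ i : Fin k, X i)).coord m = OnePoint.infty := hc
        rw [coord_fin, dif_pos hm] at h2
        exact OnePoint.coe_ne_infty _ h2
    show Q (liftW (fin ⟨k, f⟩)) = fin ⟨k, f⟩
    rw [Q_eq_of_exists h]
    exact congrArg fin (sigma_mk_eq hk _ _ fun i hi hi' =>
      val_eq (by show (fin (⟨k, f⟩ : Σ k, ∀ i : Fin k, X i)).coord i = _
                 rw [coord_fin, dif_pos hi']) _)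
  | inr z =>
    have h : ¬∃ n, liftW (inf z) n = OnePoint.infty := by
      rintro ⟨n, hn⟩
      exact OnePoint.coe_ne_infty _ hn
    show Q (liftW (inf z)) = inf z
    rw [Q_eq_of_not_exists h]
    exact congrArg inf (funext fun n => val_eq rfl _)

theorem ne_infty_of_mem_image {Y : Type} {s : Set Y} {o : OnePoint Y}
    (h : o ∈ (fun y : Y => (y : OnePoint Y)) '' s) : o ≠ OnePoint.infty := by
  rintro rfl
  obtain ⟨y, -, hy⟩ := h
  exact OnePoint.coe_ne_infty y hy

theorem preimage_cylinder (N : ℕ) (V : ∀ j, Set (X j)) (S : Set (OnePoint (X N))) :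
    Q ⁻¹' {w : W0 X | (∀ j, j < N → w.coord j ∈ (fun y : X j => (y : OnePoint (X j))) '' V j)
        ∧ w.coord N ∈ S}
      = {a : ∀ n, OnePoint (X n) |
          (∀ j, j < N → a j ∈ (fun y : X j => (y : OnePoint (X j))) '' V j) ∧ a N ∈ S} := by
  ext a
  simp only [Set.mem_preimage, Set.mem_setOf_eq]
  constructor
  · rintro ⟨h1, h2⟩
    have key : ∀ j, j < N → a j ≠ OnePoint.infty ∧ (Q a).coord j = a j := by
      intro j hj
      have hne : (Q a).coord j ≠ OnePoint.infty := ne_infty_of_mem_image (h1 j hj)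
      have h3 := ne_infty_of_coord_Q hne
      exact ⟨h3 j le_rfl, coord_Q_of a j fun m hm => h3 m hm.le⟩
    constructor
    · intro j hj
      rw [← (key j hj).2]
      exact h1 j hj
    · rw [← coord_Q_of a N fun m hm => (key m hm).1]
      exact h2
  · rintro ⟨h1, h2⟩
    have hne : ∀ m, m < N → a m ≠ OnePoint.infty := fun m hm =>
      ne_infty_of_mem_image (h1 m hm)
    have hcoord : ∀ j, j ≤ N → (Q a).coord j = a j := fun j hj =>
      coord_Q_of a j fun m hm => hne m (lt_of_lt_of_le hm hj)
    constructor
    · intro j hj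
      rw [hcoord j hj.le]
      exact h1 j hj
    · rw [hcoord N le_rfl]
      exact h2

variable [∀ n, TopologicalSpace (X n)]

theorem continuous_Q : Continuous (Q : (∀ n, OnePoint (X n)) → W0 X) :=
  continuous_coinduced_rng

theorem isOpen_of_preimage {s : Set (W0 X)} (h : IsOpen (Q ⁻¹' s)) : IsOpen s :=
  isOpen_coinduced.mpr h

theorem isOpen_cylinder (N : ℕ) (V : ∀ j, Set (X j)) (hV : ∀ j, IsOpen (V j))
    (S : Set (OnePoint (X N))) (hS : IsOpen S) :
    IsOpen {w : W0 X | (∀ j, j < N → w.coord j ∈ (fun y : X j => (y : OnePoint (X j))) '' V j)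
        ∧ w.coord N ∈ S} := by
  apply isOpen_of_preimage
  rw [preimage_cylinder]
  have heq : {a : ∀ n, OnePoint (X n) |
      (∀ j, j < N → a j ∈ (fun y : X j => (y : OnePoint (X j))) '' V j) ∧ a N ∈ S}
    = (⋂ j ∈ Finset.range N,
        (fun a : ∀ n, OnePoint (X n) => a j) ⁻¹' ((fun y : X j => (y : OnePoint (X j))) '' V j))
      ∩ ((fun a : ∀ n, OnePoint (X n) => a N) ⁻¹' S) := by
    ext a
    simp [Finset.mem_range]
  rw [heq]
  refine IsOpen.inter (isOpen_biInter_finset fun j _ => ?_)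
    ((continuous_apply N).isOpen_preimage _ hS)
  exact (continuous_apply j).isOpen_preimage _ (OnePoint.isOpen_image_coe.mpr (hV j))

theorem evmem {xseq : ℕ → W0 X} {x : W0 X} (ht : Filter.Tendsto xseq Filter.atTop (𝓝 x))
    {U : Set (W0 X)} (hU : IsOpen U) (hx : x ∈ U) :
    ∀ᶠ n in Filter.atTop, xseq n ∈ U :=
  ht (hU.mem_nhds hx)

end W0

/-- Theorem 3.6: convergence in `W₀` is pointwise convergence: `x^n → x` in the quotient
topology iff (i) for `x ∈ Z`: `ℓ(x^n) → ∞` and `x^n_i → x_i` in `X_i` for all `i`, or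
(ii) for `x ∈ Y₀` of length `k`: eventually `ℓ(x^n) ≥ k`, `x^n_i → x_i` in `X_i` for
`i < k`, and `x^n_{k+1} → ∞_{k+1}` in `X_{k+1}^∞` (where the `(k+1)`-th coordinate of
`x^n` is taken to be the point at infinity whenever `ℓ(x^n) = k`; this is exactly the
convention built into `W0.coord`). -/
theorem stmt10 (X : ℕ → Type) [∀ n, TopologicalSpace (X n)]
    [∀ n, LocallyCompactSpace (X n)] [∀ n, SecondCountableTopology (X n)]
    [∀ n, T2Space (X n)] (xseq : ℕ → W0 X) (x : W0 X) :
    Filter.Tendsto xseq Filter.atTop (nhds x) ↔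
      ((∃ z : ∀ n, X n, x = W0.inf z ∧
          (∀ M : ℕ, ∀ᶠ n in Filter.atTop, (M : ℕ∞) ≤ (xseq n).len) ∧
          ∀ i : ℕ, Filter.Tendsto (fun n => (xseq n).coord i) Filter.atTop
            (nhds ((z i : X i) : OnePoint (X i)))) ∨
        (∃ (k : ℕ) (f : ∀ i : Fin k, X i), x = W0.fin ⟨k, f⟩ ∧
          (∀ᶠ n in Filter.atTop, (k : ℕ∞) ≤ (xseq n).len) ∧
          (∀ i : Fin k, Filter.Tendsto (fun n => (xseq n).coord i) Filter.atTop
            (nhds ((f i : X i) : OnePoint (X i)))) ∧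
          Filter.Tendsto (fun n => (xseq n).coord k) Filter.atTop
            (nhds (OnePoint.infty : OnePoint (X k))))) := by
  classical
  haveI : ∀ n, FirstCountableTopology (OnePoint (X n)) := fun n => onePoint_firstCountable (X n)
  constructor
  · -- forward direction
    intro ht
    cases x with
    | inr z =>
      left
      refine ⟨z, rfl, ?_, ?_⟩
      · -- lengths tend to infinity
        intro M
        have hopen := W0.isOpen_cylinder (X := X) M (fun j => Set.univ) (fun j => isOpen_univ)
          ((fun y : X M => (y : OnePoint (X M))) '' Set.univ)
          (OnePoint.isOpen_image_coe.mpr isOpen_univ)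
        have hxU : (W0.inf z : W0 X) ∈ {w : W0 X |
            (∀ j, j < M → w.coord j ∈ (fun y : X j => (y : OnePoint (X j))) '' Set.univ)
            ∧ w.coord M ∈ (fun y : X M => (y : OnePoint (X M))) '' Set.univ} :=
          ⟨fun j _ => ⟨z j, Set.mem_univ _, rfl⟩, ⟨z M, Set.mem_univ _, rfl⟩⟩
        refine (W0.evmem ht hopen hxU).mono fun n hn => ?_
        have h1 := W0.le_len_of_coord_ne (W0.ne_infty_of_mem_image hn.2)
        exact le_trans (by exact_mod_cast Nat.le_succ M) h1
      · -- coordinate convergence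
        intro i
        rw [OnePoint.nhds_coe_eq]
        refine ((nhds_basis_opens (z i)).map _).tendsto_right_iff.mpr ?_
        rintro V ⟨hzV, hVopen⟩
        have hopen := W0.isOpen_cylinder (X := X) i (fun j => Set.univ) (fun j => isOpen_univ)
          ((fun y : X i => (y : OnePoint (X i))) '' V) (OnePoint.isOpen_image_coe.mpr hVopen)
        have hxU : (W0.inf z : W0 X) ∈ {w : W0 X |
            (∀ j, j < i → w.coord j ∈ (fun y : X j => (y : OnePoint (X j))) '' Set.univ)
            ∧ w.coord i ∈ (fun y : X i => (y : OnePoint (X i))) '' V} :=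
          ⟨fun j _ => ⟨z j, Set.mem_univ _, rfl⟩, ⟨z i, hzV, rfl⟩⟩
        exact (W0.evmem ht hopen hxU).mono fun n hn => hn.2
    | inl p =>
      obtain ⟨k, f⟩ := p
      right
      refine ⟨k, f, rfl, ?_, ?_, ?_⟩
      · -- lengths eventually ≥ k
        rcases k with _ | k'
        · exact Filter.Eventually.of_forall fun n => by simp
        · have hopen := W0.isOpen_cylinder (X := X) k' (fun j => Set.univ) (fun j => isOpen_univ)
            ((fun y : X k' => (y : OnePoint (X k'))) '' Set.univ)
            (OnePoint.isOpen_image_coe.mpr isOpen_univ)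
          have hxU : (W0.fin ⟨k' + 1, f⟩ : W0 X) ∈ {w : W0 X |
              (∀ j, j < k' → w.coord j ∈ (fun y : X j => (y : OnePoint (X j))) '' Set.univ)
              ∧ w.coord k' ∈ (fun y : X k' => (y : OnePoint (X k'))) '' Set.univ} := by
            constructor
            · intro j hj
              exact ⟨f ⟨j, hj.trans (Nat.lt_succ_self k')⟩, Set.mem_univ _,
                (W0.coord_fin_of_lt ⟨k' + 1, f⟩ (hj.trans (Nat.lt_succ_self k'))).symm⟩
            · exact ⟨f ⟨k', Nat.lt_succ_self k'⟩, Set.mem_univ _,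
                (W0.coord_fin_of_lt ⟨k' + 1, f⟩ (Nat.lt_succ_self k')).symm⟩
          refine (W0.evmem ht hopen hxU).mono fun n hn => ?_
          exact W0.le_len_of_coord_ne (W0.ne_infty_of_mem_image hn.2)
      · -- coordinates i < k converge
        intro i
        rw [OnePoint.nhds_coe_eq]
        refine ((nhds_basis_opens (f i)).map _).tendsto_right_iff.mpr ?_
        rintro V ⟨hfV, hVopen⟩
        have hopen := W0.isOpen_cylinder (X := X) i.val (fun j => Set.univ)
          (fun j => isOpen_univ)
          ((fun y : X i.val => (y : OnePoint (X i.val))) '' V)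
          (OnePoint.isOpen_image_coe.mpr hVopen)
        have hxU : (W0.fin ⟨k, f⟩ : W0 X) ∈ {w : W0 X |
            (∀ j, j < i.val → w.coord j ∈ (fun y : X j => (y : OnePoint (X j))) '' Set.univ)
            ∧ w.coord i.val ∈ (fun y : X i.val => (y : OnePoint (X i.val))) '' V} := by
          constructor
          · intro j hj
            exact ⟨f ⟨j, hj.trans i.isLt⟩, Set.mem_univ _,
              (W0.coord_fin_of_lt ⟨k, f⟩ (hj.trans i.isLt)).symm⟩
          · exact ⟨f i, hfV, (W0.coord_fin_of_lt ⟨k, f⟩ i.isLt).symm⟩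
        exact (W0.evmem ht hopen hxU).mono fun n hn => hn.2
      · -- coordinate k tends to infinity
        refine OnePoint.hasBasis_nhds_infty.tendsto_right_iff.mpr ?_
        rintro s ⟨hsc, hsk⟩
        have hSopen : IsOpen (((fun y : X k => (y : OnePoint (X k))) '' s)ᶜ) :=
          isOpen_compl_iff.mpr (hsk.image OnePoint.continuous_coe).isClosed
        have hopen := W0.isOpen_cylinder (X := X) k (fun j => Set.univ) (fun j => isOpen_univ)
          (((fun y : X k => (y : OnePoint (X k))) '' s)ᶜ) hSopen
        have hxU : (W0.fin ⟨k, f⟩ : W0 X) ∈ {w : W0 X |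
            (∀ j, j < k → w.coord j ∈ (fun y : X j => (y : OnePoint (X j))) '' Set.univ)
            ∧ w.coord k ∈ ((fun y : X k => (y : OnePoint (X k))) '' s)ᶜ} := by
          constructor
          · intro j hj
            exact ⟨f ⟨j, hj⟩, Set.mem_univ _, (W0.coord_fin_of_lt ⟨k, f⟩ hj).symm⟩
          · show (W0.fin ⟨k, f⟩).coord k ∈ _
            rw [W0.coord_fin_of_ge ⟨k, f⟩ (lt_irrefl k)]
            exact fun hc => OnePoint.infty_notMem_image_coe hc
        refine (W0.evmem ht hopen hxU).mono fun n hn => ?_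
        rw [← OnePoint.compl_image_coe]
        exact hn.2
  · -- backward direction
    intro H
    by_contra hT
    have hexU : ∃ U ∈ 𝓝 x, ∃ᶠ n in Filter.atTop, xseq n ∉ U := by
      by_contra hc
      push_neg at hc
      apply hT
      intro U hU
      have h1 := hc U hU
      exact h1
    obtain ⟨U, hU, hfreq⟩ := hexU
    obtain ⟨φ, hφ, hout⟩ := Filter.extraction_of_frequently_atTop hfreq
    obtain ⟨a, ψ, hψ, hlim⟩ := SeqCompactSpace.tendsto_subseq (fun n => W0.liftW (xseq (φ n)))
    have hcoord : ∀ (i : ℕ) (c : OnePoint (X i)),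
        Filter.Tendsto (fun n => (xseq n).coord i) Filter.atTop (𝓝 c) → a i = c := by
      intro i c hc
      have h1 : Filter.Tendsto (fun n => (xseq (φ (ψ n))).coord i) Filter.atTop (𝓝 (a i)) :=
        tendsto_pi_nhds.mp hlim i
      have h2 : Filter.Tendsto (fun n => (xseq (φ (ψ n))).coord i) Filter.atTop (𝓝 c) :=
        hc.comp ((hφ.comp hψ).tendsto_atTop)
      exact tendsto_nhds_unique h1 h2
    have hQa : W0.Q a = x := by
      rcases H with ⟨z, hx, -, hcc⟩ | ⟨k, f, hx, -, hcc, hck⟩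
      · have ha : ∀ i, a i = ((z i : X i) : OnePoint (X i)) := fun i => hcoord i _ (hcc i)
        have hne : ¬∃ n, a n = OnePoint.infty := by
          rintro ⟨n, hn⟩
          rw [ha n] at hn
          exact OnePoint.coe_ne_infty _ hn
        rw [W0.Q_eq_of_not_exists hne, hx]
        exact congrArg W0.inf (funext fun n => W0.val_eq (ha n) _)
      · have hai : ∀ i : Fin k, a i.val = ((f i : X i.val) : OnePoint (X i.val)) :=
          fun i => hcoord i.val _ (hcc i)
        have hak : a k = OnePoint.infty := hcoord k _ hck
        have he : ∃ n, a n = OnePoint.infty := ⟨k, hak⟩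
        have hfind : Nat.find he = k := by
          rw [Nat.find_eq_iff]
          exact ⟨hak, fun m hm hc => by
            rw [hai ⟨m, hm⟩] at hc
            exact OnePoint.coe_ne_infty _ hc⟩
        rw [W0.Q_eq_of_exists he, hx]
        exact congrArg W0.fin (W0.sigma_mk_eq hfind _ _ fun i hi hi' =>
          W0.val_eq (hai ⟨i, hi'⟩) _)
    have htend : Filter.Tendsto (fun n => xseq (φ (ψ n))) Filter.atTop (𝓝 x) := by
      have h1 := (W0.continuous_Q.tendsto a).comp hlim
      rw [hQa] at h1
      refine h1.congr fun n => ?_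
      exact W0.Q_liftW _
    have hmem : ∀ᶠ n in Filter.atTop, xseq (φ (ψ n)) ∈ U := htend hU
    obtain ⟨n, hn⟩ := hmem.exists
    exact hout (ψ n) hn
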